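/- Let P be the free commutative monoid on a set S of points each with a degree deg : S → ℕ≥1, and suppose for each n ≥ 1 there are finitely many points of degree n. Then in ℚ[[t]], the product Π_{x ∈ S} (1 − t^{deg x})^{−1} equals Σ_{α} t^{deg α}, the sum over all effective cycles α ∈ P, where deg(Σ a_x x) = Σ a_x deg(x). -/

import Mathlib

open PowerSeries

/-- The product topology (coefficientwise convergence, i.e. `t`-adic stabilization of
partial sums/products) on `ℚ[[t]]`. -/
noncomputable instance : TopologicalSpace ℚ⟦X⟧ := Pi.topologicalSpace

namespace Stmt14Aux

open Finset in
/-- The geometric series `∑ X^(d k)` is the inverse of `1 - X^d`. -/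
lemma inv_one_sub_X_pow (d : ℕ) (hd : 1 ≤ d) :
    (1 - (X : ℚ⟦X⟧) ^ d)⁻¹ = PowerSeries.mk fun k => if d ∣ k then 1 else 0 := by
  rw [PowerSeries.inv_eq_iff_mul_eq_one]
  · ext k
    rw [mul_sub, mul_one, map_sub, PowerSeries.coeff_mul_X_pow', PowerSeries.coeff_mk]
    by_cases hk : k = 0
    · subst hk
      rw [if_pos (dvd_zero d), if_neg (by omega), sub_zero, PowerSeries.coeff_zero_eq_constantCoeff,
        map_one]
    · rw [PowerSeries.coeff_one, if_neg hk]
      by_cases h1 : d ∣ k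
      · have hdk : d ≤ k := Nat.le_of_dvd (Nat.pos_of_ne_zero hk) h1
        rw [if_pos h1, if_pos hdk, PowerSeries.coeff_mk, if_pos (Nat.dvd_sub h1 dvd_rfl),
          sub_self]
      · rw [if_neg h1]
        by_cases h2 : d ≤ k
        · have h3 : ¬ d ∣ k - d := fun h3 =>
            h1 (by rw [← Nat.sub_add_cancel h2]; exact Nat.dvd_add h3 dvd_rfl)
          rw [if_pos h2, PowerSeries.coeff_mk, if_neg h3, sub_zero]
        · rw [if_neg h2, sub_zero]
  · rw [map_sub, map_one, map_pow, PowerSeries.constantCoeff_X,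
      zero_pow (by omega : d ≠ 0), sub_zero]
    exact one_ne_zero

variable {S : Type} (deg : S → ℕ)

/-- Degree of an effective 0-cycle. -/
def D (α : S →₀ ℕ) : ℕ := α.sum fun x a => a * deg x

lemma D_add (α β : S →₀ ℕ) : D deg (α + β) = D deg α + D deg β :=
  Finsupp.sum_add_index' (fun x => zero_mul _) (fun x a b => add_mul a b _)

lemma D_single (x : S) (a : ℕ) : D deg (Finsupp.single x a) = a * deg x :=
  Finsupp.sum_single_index (zero_mul _)

lemma D_zero : D deg 0 = 0 := Finsupp.sum_zero_index

lemma D_erase (x : S) (α : S →₀ ℕ) :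
    D deg α = α x * deg x + D deg (α.erase x) := by
  conv_lhs => rw [← Finsupp.single_add_erase x α]
  rw [D_add, D_single]

lemma le_D (α : S →₀ ℕ) (x : S) : α x * deg x ≤ D deg α := by
  rw [D_erase deg x α]; exact Nat.le_add_right _ _

lemma deg_le_D (α : S →₀ ℕ) (x : S) (hx : x ∈ α.support) : deg x ≤ D deg α := by
  refine le_trans ?_ (le_D deg α x)
  have : 1 ≤ α x := Nat.pos_of_ne_zero (Finsupp.mem_support_iff.mp hx)
  calc deg x = 1 * deg x := (one_mul _).symm
    _ ≤ α x * deg x := Nat.mul_le_mul_right _ this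

/-- The set of points of degree at most `n` is finite. -/
lemma T_finite (hfin : ∀ n : ℕ, {x : S | deg x = n}.Finite) (n : ℕ) : {x : S | deg x ≤ n}.Finite := by
  have : {x : S | deg x ≤ n} ⊆ ⋃ i ∈ Set.Iic n, {x : S | deg x = i} := by
    intro x hx
    exact Set.mem_biUnion (show deg x ∈ Set.Iic n from hx) rfl
  exact Set.Finite.subset (Set.Finite.biUnion (Set.finite_Iic n) fun i _ => hfin i) this

/-- There are finitely many effective cycles of each degree. -/
lemma D_finite (hdeg : ∀ x, 1 ≤ deg x) (hfin : ∀ n : ℕ, {x : S | deg x = n}.Finite) (n : ℕ) : {α : S →₀ ℕ | D deg α = n}.Finite := by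
  classical
  set T : Finset S := (T_finite deg hfin n).toFinset with hT
  set f : S →₀ ℕ := ∑ x ∈ T, Finsupp.single x n with hf
  have hfval : ∀ y : S, f y = if y ∈ T then n else 0 := by
    intro y
    rw [hf, Finset.sum_apply']
    simp only [Finsupp.single_apply]
    exact Finset.sum_ite_eq' T y fun _ => n
  refine Set.Finite.subset (Set.finite_Iic f) ?_
  intro α hα
  rw [Set.mem_Iic, Finsupp.le_def]
  intro y
  by_cases hy : y ∈ α.support
  · have h1 : deg y ≤ n := hα ▸ deg_le_D deg α y hy
    have h2 : α y ≤ n := by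
      have := hα ▸ le_D deg α y
      have hdy := hdeg y
      calc α y = α y * 1 := (mul_one _).symm
        _ ≤ α y * deg y := Nat.mul_le_mul_left _ hdy
        _ ≤ n := this
    rw [hfval y, if_pos (by rw [hT, Set.Finite.mem_toFinset]; exact h1)]
    exact h2
  · rw [Finsupp.notMem_support_iff.mp hy]
    exact Nat.zero_le _

/-- Effective cycles of degree `n` supported on `G`. -/
lemma A_finite (hdeg : ∀ x, 1 ≤ deg x) (hfin : ∀ n : ℕ, {x : S | deg x = n}.Finite) (G : Finset S) (n : ℕ) :
    {α : S →₀ ℕ | ↑α.support ⊆ (G : Set S) ∧ D deg α = n}.Finite :=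
  Set.Finite.subset (D_finite deg hdeg hfin n) fun _ h => h.2

/-- The finset of effective cycles of degree `n` supported on `G`. -/
noncomputable def A (hdeg : ∀ x, 1 ≤ deg x) (hfin : ∀ n : ℕ, {x : S | deg x = n}.Finite) (G : Finset S) (n : ℕ) : Finset (S →₀ ℕ) :=
  (A_finite deg hdeg hfin G n).toFinset

lemma mem_A (hdeg : ∀ x, 1 ≤ deg x) (hfin : ∀ n : ℕ, {x : S | deg x = n}.Finite) {G : Finset S} {n : ℕ} {α : S →₀ ℕ} :
    α ∈ A deg hdeg hfin G n ↔ ↑α.support ⊆ (G : Set S) ∧ D deg α = n := by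
  rw [A, Set.Finite.mem_toFinset]; rfl

open Finset in
lemma card_A_insert [DecidableEq S] (hdeg : ∀ x, 1 ≤ deg x) (hfin : ∀ n : ℕ, {x : S | deg x = n}.Finite) (x : S) (G : Finset S) (hx : x ∉ G) (n : ℕ) :
    (A deg hdeg hfin (insert x G) n).card =
      ∑ p ∈ Finset.HasAntidiagonal.antidiagonal n,
        if deg x ∣ p.1 then (A deg hdeg hfin G p.2).card else 0 := by
  classical
  have hd1 : 1 ≤ deg x := hdeg x
  rw [Finset.card_eq_sum_card_fiberwise
    (f := fun α : S →₀ ℕ => (α x * deg x, n - α x * deg x)) (t := Finset.HasAntidiagonal.antidiagonal n)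
    (by
      intro α hα
      rw [Finset.mem_coe, mem_A] at hα
      rw [Finset.mem_coe, Finset.HasAntidiagonal.mem_antidiagonal]
      have : α x * deg x ≤ n := hα.2 ▸ le_D deg α x
      show α x * deg x + (n - α x * deg x) = n
      omega)]
  refine Finset.sum_congr rfl ?_
  rintro ⟨i, j⟩ hp
  rw [Finset.HasAntidiagonal.mem_antidiagonal] at hp
  by_cases h : deg x ∣ i
  · rw [if_pos h]
    obtain ⟨a, rfl⟩ := h
    refine Finset.card_bij' (fun α _ => α.erase x) (fun β _ => β + Finsupp.single x a)
      ?_ ?_ ?_ ?_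
    · intro α hα
      simp only [Finset.mem_filter, mem_A, Prod.mk.injEq] at hα
      obtain ⟨⟨hsupp, hD⟩, hfst, _⟩ := hα
      rw [mem_A]
      constructor
      · intro y hy
        have hy' : y ∈ (α.erase x).support := hy
        rw [Finsupp.support_erase, Finset.mem_erase] at hy'
        have := hsupp hy'.2
        simp only [Finset.coe_insert, Set.mem_insert_iff] at this
        rcases this with h1 | h1
        · exact absurd h1 hy'.1
        · exact h1
      · show D deg (α.erase x) = j
        have hp' : deg x * a + j = n := hp
        have h1 := D_erase deg x α
        omega
    · intro β hβ
      rw [mem_A] at hβ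
      obtain ⟨hsupp, hD⟩ := hβ
      have hβx : β x = 0 := by
        rw [← Finsupp.notMem_support_iff]
        intro hmem
        exact hx (hsupp hmem)
      simp only [Finset.mem_filter, mem_A, Prod.mk.injEq]
      have happ : (β + Finsupp.single x a) x = a := by
        rw [Finsupp.add_apply, Finsupp.single_eq_same, hβx, zero_add]
      refine ⟨⟨?_, ?_⟩, ?_, ?_⟩
      · intro y hy
        have := Finsupp.support_add hy
        rw [Finset.mem_union] at this
        simp only [Finset.coe_insert, Set.mem_insert_iff]
        rcases this with h1 | h1
        · exact Or.inr (hsupp h1)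
        · exact Or.inl (Finset.mem_singleton.mp (Finsupp.support_single_subset h1))
      · rw [D_add, D_single, hD]
        have hp' : deg x * a + j = n := hp
        have : a * deg x = deg x * a := mul_comm _ _
        omega
      · rw [happ, mul_comm]
      · rw [happ]
        have hp' : deg x * a + j = n := hp
        have : a * deg x = deg x * a := mul_comm _ _
        omega
    · intro α hα
      simp only [Finset.mem_filter, mem_A, Prod.mk.injEq] at hα
      obtain ⟨⟨_, _⟩, hfst, _⟩ := hα
      have hαx : α x = a := by
        have h2 : α x * deg x = a * deg x := by rw [hfst, mul_comm]
        exact Nat.eq_of_mul_eq_mul_right (by omega) h2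
      show α.erase x + Finsupp.single x a = α
      have h3 := Finsupp.erase_add_single x α
      rw [hαx] at h3
      exact h3
    · intro β hβ
      rw [mem_A] at hβ
      have hβx : β x = 0 := by
        rw [← Finsupp.notMem_support_iff]
        intro hmem
        exact hx (hβ.1 hmem)
      show Finsupp.erase x (β + Finsupp.single x a) = β
      rw [Finsupp.erase_add, Finsupp.erase_single,
        Finsupp.erase_of_notMem_support (Finsupp.notMem_support_iff.mpr hβx), add_zero]
  · rw [if_neg h, Finset.card_eq_zero, Finset.filter_eq_empty_iff]
    intro α _
    intro hcond
    have h2 : α x * deg x = i := congrArg Prod.fst hcond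
    exact h ⟨α x, by rw [← h2, mul_comm]⟩

open Finset in
lemma coeff_prod_eq (hdeg : ∀ x, 1 ≤ deg x) (hfin : ∀ n : ℕ, {x : S | deg x = n}.Finite) (G : Finset S) (n : ℕ) :
    PowerSeries.coeff n (∏ y ∈ G, (1 - (X : ℚ⟦X⟧) ^ deg y)⁻¹) =
      ((A deg hdeg hfin G n).card : ℚ) := by
  classical
  induction G using Finset.induction generalizing n with
  | empty =>
    rw [Finset.prod_empty]
    have hA : A deg hdeg hfin ∅ n = if n = 0 then {0} else ∅ := by
      ext α
      rw [mem_A]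
      constructor
      · rintro ⟨hsupp, hD⟩
        have : α = 0 := by
          ext y
          by_contra hy
          exact absurd (hsupp (Finsupp.mem_support_iff.mpr hy)) (by simp)
        subst this
        rw [D_zero] at hD
        simp [← hD]
      · intro hα
        split_ifs at hα with hn
        · rw [Finset.mem_singleton] at hα
          subst hα
          exact ⟨by simp, by rw [D_zero, hn]⟩
        · exact absurd hα (Finset.notMem_empty α)
    rw [hA]
    split_ifs with hn
    · subst hn
      simp
    · rw [PowerSeries.coeff_one, if_neg hn]
      simp
  | @insert x G hx ih =>
    rw [Finset.prod_insert hx, inv_one_sub_X_pow (deg x) (hdeg x), PowerSeries.coeff_mul,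
      card_A_insert deg hdeg hfin x G hx n, Nat.cast_sum]
    refine Finset.sum_congr rfl ?_
    rintro ⟨i, j⟩ _
    rw [PowerSeries.coeff_mk, ih j]
    split_ifs with h
    · rw [one_mul]
    · rw [zero_mul, Nat.cast_zero]

lemma A_eq_full (hdeg : ∀ x, 1 ≤ deg x) (hfin : ∀ n : ℕ, {x : S | deg x = n}.Finite) (G : Finset S) (n : ℕ) (hG : ∀ y, deg y ≤ n → y ∈ G) :
    A deg hdeg hfin G n = (D_finite deg hdeg hfin n).toFinset := by
  ext α
  rw [mem_A, Set.Finite.mem_toFinset]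
  constructor
  · exact fun h => h.2
  · intro h
    refine ⟨?_, h⟩
    intro y hy
    have hy' : y ∈ α.support := hy
    exact hG y (h ▸ deg_le_D deg α y hy')

/-- The zeta function: its `n`-th coefficient counts effective cycles of degree `n`. -/
noncomputable def P (hdeg : ∀ x, 1 ≤ deg x) (hfin : ∀ n : ℕ, {x : S | deg x = n}.Finite) : ℚ⟦X⟧ :=
  PowerSeries.mk fun n => (((D_finite deg hdeg hfin n).toFinset.card : ℕ) : ℚ)

lemma coeff_P (hdeg : ∀ x, 1 ≤ deg x) (hfin : ∀ n : ℕ, {x : S | deg x = n}.Finite) (n : ℕ) :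
    PowerSeries.coeff n (P deg hdeg hfin) =
      (((D_finite deg hdeg hfin n).toFinset.card : ℕ) : ℚ) := by
  rw [P, PowerSeries.coeff_mk]

/-- Evaluation of a power series (as a function on `Unit →₀ ℕ`) is a coefficient. -/
lemma eval_eq_coeff (p : ℚ⟦X⟧) (i : Unit →₀ ℕ) :
    p i = PowerSeries.coeff (i ()) p := by
  have : i = Finsupp.single () (i ()) := Finsupp.unique_single i
  rw [PowerSeries.coeff]
  conv_lhs => rw [this]
  rfl

/-- Coefficientwise eventual equality implies convergence in the product topology. -/
lemma tendsto_coeffwise {ι : Type*} {F : ι → ℚ⟦X⟧} {l : Filter ι} {Q : ℚ⟦X⟧}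
    (h : ∀ n : ℕ, ∀ᶠ b in l, PowerSeries.coeff n (F b) = PowerSeries.coeff n Q) :
    Filter.Tendsto F l (nhds Q) := by
  apply tendsto_pi_nhds.mpr
  intro i
  refine Filter.Tendsto.congr' ?_
    (tendsto_const_nhds : Filter.Tendsto (fun _ : ι => Q i) l (nhds (Q i)))
  filter_upwards [h (i ())] with b hb
  rw [eval_eq_coeff Q i, eval_eq_coeff (F b) i, hb]

end Stmt14Aux

open Stmt14Aux in
/-- Euler product for the zeta function of effective `0`-cycles: for a set `S` of
points with degrees `deg x ≥ 1`, finitely many of each degree, the product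
`Π_{x ∈ S} (1 − t^{deg x})⁻¹` equals `Σ_α t^{deg α}`, summed over all effective cycles
`α ∈ ℕ^{(S)}`, where `deg (Σ a_x x) = Σ a_x deg x`. -/
theorem stmt14 (S : Type) (deg : S → ℕ) (hdeg : ∀ x, 1 ≤ deg x)
    (hfin : ∀ n : ℕ, {x : S | deg x = n}.Finite) :
    ∏' x : S, (1 - (X : ℚ⟦X⟧) ^ deg x)⁻¹ =
      ∑' α : S →₀ ℕ, (X : ℚ⟦X⟧) ^ (α.sum fun x a => a * deg x) := by
  classical
  haveI : T2Space ℚ⟦X⟧ := inferInstanceAs (T2Space ((Unit →₀ ℕ) → ℚ))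
  have hprod : HasProd (fun x : S => (1 - (X : ℚ⟦X⟧) ^ deg x)⁻¹) (P deg hdeg hfin) := by
    apply tendsto_coeffwise
    intro n
    rw [SummationFilter.unconditional_filter, Filter.eventually_atTop]
    refine ⟨(T_finite deg hfin n).toFinset, ?_⟩
    intro G hG
    have : ∀ y, deg y ≤ n → y ∈ G := fun y hy =>
      hG (by rw [Set.Finite.mem_toFinset]; exact hy)
    rw [coeff_prod_eq deg hdeg hfin G n, A_eq_full deg hdeg hfin G n this,
      coeff_P deg hdeg hfin n]
  have hsum : HasSum (fun α : S →₀ ℕ => (X : ℚ⟦X⟧) ^ (D deg α)) (P deg hdeg hfin) := by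
    apply tendsto_coeffwise
    intro n
    rw [SummationFilter.unconditional_filter, Filter.eventually_atTop]
    refine ⟨(D_finite deg hdeg hfin n).toFinset, ?_⟩
    intro B hB
    rw [map_sum, coeff_P deg hdeg hfin n]
    have : ∀ α ∈ B, PowerSeries.coeff n ((X : ℚ⟦X⟧) ^ (D deg α)) =
        if D deg α = n then (1 : ℚ) else 0 := by
      intro α _
      rw [PowerSeries.coeff_X_pow]
      exact if_congr eq_comm rfl rfl
    rw [Finset.sum_congr rfl this, Finset.sum_boole]
    congr 2
    ext α
    simp only [Finset.mem_filter, Set.Finite.mem_toFinset, Set.mem_setOf_eq]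
    constructor
    · exact fun h => h.2
    · intro h
      exact ⟨hB (by rw [Set.Finite.mem_toFinset]; exact h), h⟩
  have hD : (∑' α : S →₀ ℕ, (X : ℚ⟦X⟧) ^ (α.sum fun x a => a * deg x)) =
      ∑' α : S →₀ ℕ, (X : ℚ⟦X⟧) ^ (D deg α) := rfl
  rw [hprod.tprod_eq, hD, hsum.tsum_eq]
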